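/- Let P > 0 and A, B ∈ ℝ with (A,B) ≠ (0,0), and define ψ : {ζ ∈ ℂ : Re ζ > 0} → ℂ by ψ(ζ) = Aζ − B(ζ² + P²)^{1/2}, where (·)^{1/2} is the principal square root. Then ψ has a zero in {Re ζ > 0} if and only if (A > B and B > 0) or (A < B and B < 0). -/
import Mathlib

lemma sqrtc (r : ℝ) (hr : 0 ≤ r) : (r : ℂ) ^ ((1:ℂ)/2) = (Real.sqrt r : ℂ) := by
  rw [show ((1:ℂ)/2) = (((1/2 : ℝ) : ℂ)) by norm_num, ← Complex.ofReal_cpow hr,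
    ← Real.sqrt_eq_rpow]

lemma aux_exists (P A B : ℝ) (hP : 0 < P) (hB : B ≠ 0) (hD : B^2 < A^2)
    (hsign : A * |B| = B * |A|) :
    ∃ ζ : ℂ, 0 < ζ.re ∧
        (A : ℂ) * ζ - (B : ℂ) * ((ζ ^ 2 + (P : ℂ) ^ 2) ^ ((1 : ℂ) / 2)) = 0 := by
  set s := Real.sqrt (A^2 - B^2) with hs
  have hs0 : 0 < s := Real.sqrt_pos.mpr (by linarith)
  have hs2 : s^2 = A^2 - B^2 := Real.sq_sqrt (by linarith)
  have hBpos : 0 < |B| := abs_pos.mpr hB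
  refine ⟨((|B| * P / s : ℝ) : ℂ), by simpa using by positivity, ?_⟩
  have hcast : (((|B| * P / s : ℝ) : ℂ))^2 + (P:ℂ)^2 = (((|B| * P / s)^2 + P^2 : ℝ) : ℂ) := by
    push_cast; ring
  rw [hcast, sqrtc _ (by positivity)]
  have h1 : (|B| * P / s)^2 + P^2 = (|A| * P / s)^2 := by
    field_simp
    nlinarith [hs2, sq_abs A, sq_abs B]
  rw [h1, Real.sqrt_sq (by positivity)]
  have : A * (|B| * P / s) - B * (|A| * P / s) = 0 := by
    field_simp
    linear_combination P * hsign
  exact_mod_cast congrArg (Complex.ofReal) this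

theorem psi_has_zero_iff
    (P A B : ℝ) (hP : 0 < P) (hAB : (A, B) ≠ (0, 0)) :
    (∃ ζ : ℂ, 0 < ζ.re ∧
        (A : ℂ) * ζ - (B : ℂ) * ((ζ ^ 2 + (P : ℂ) ^ 2) ^ ((1 : ℂ) / 2)) = 0) ↔
      ((B < A ∧ 0 < B) ∨ (A < B ∧ B < 0)) := by
  constructor
  · rintro ⟨ζ, hre, h⟩
    set w := (ζ ^ 2 + (P : ℂ) ^ 2) ^ ((1:ℂ)/2) with hw
    have hz0 : ζ ^ 2 + (P:ℂ)^2 ≠ 0 := by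
      intro h0
      have h1 : (ζ^2 + (P:ℂ)^2).re = 0 := by rw [h0]; simp
      have h2 : (ζ^2 + (P:ℂ)^2).im = 0 := by rw [h0]; simp
      simp [pow_two, Complex.mul_re, Complex.mul_im, Complex.add_re, Complex.add_im] at h1 h2
      have him : ζ.im = 0 := by
        have hri : ζ.re * ζ.im = 0 := by linear_combination h2 / 2
        rcases mul_eq_zero.mp hri with h' | h'
        · exact absurd h' hre.ne'
        · exact h'
      nlinarith [h1, him, hre, hP]
    have hw2 : w ^ 2 = ζ ^ 2 + (P:ℂ)^2 := by
      rw [hw, sq, ← Complex.cpow_add _ _ hz0]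
      norm_num
    have key : ((A:ℂ)^2 - (B:ℂ)^2) * ζ^2 = (B:ℂ)^2 * (P:ℂ)^2 := by
      linear_combination ((A:ℂ) * ζ + (B:ℂ) * w) * h + (B:ℂ)^2 * hw2
    by_cases hB : B = 0
    · have hA : A ≠ 0 := by simpa [hB, Prod.ext_iff] using hAB
      subst hB
      simp at h
      rcases h with h | h
      · exact absurd h hA
      · exact absurd (by simp [h] : ζ.re = 0) hre.ne'
    · have hAB2 : A^2 ≠ B^2 := by
        intro h'
        have hc : ((A:ℂ)^2 - (B:ℂ)^2) = 0 := by
          norm_cast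
          linarith
        rw [hc, zero_mul] at key
        have : B^2 * P^2 = 0 := by exact_mod_cast key.symm
        have hpos : 0 < B^2 * P^2 := by positivity
        linarith
      have keyim := congrArg Complex.im key
      have keyre := congrArg Complex.re key
      simp [pow_two, Complex.mul_re, Complex.mul_im, Complex.add_re, Complex.add_im] at keyim keyre
      have him : ζ.im = 0 := by
        rcases keyim with h' | h'
        · exact absurd (by nlinarith : A ^ 2 = B ^ 2) hAB2
        · have hri : ζ.re * ζ.im = 0 := by linear_combination h' / 2
          rcases mul_eq_zero.mp hri with h'' | h''
          · exact absurd h'' hre.ne'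
          · exact h''
      -- ζ is real
      have hz : ζ = ((ζ.re : ℝ) : ℂ) := by
        apply Complex.ext <;> simp [him]
      rw [hw] at h
      rw [hz] at h
      set a := ζ.re with ha
      have hcast : (((a : ℝ) : ℂ))^2 + (P:ℂ)^2 = ((a^2 + P^2 : ℝ) : ℂ) := by push_cast; ring
      rw [hcast, sqrtc _ (by positivity)] at h
      have hreal : A * a - B * Real.sqrt (a^2 + P^2) = 0 := by exact_mod_cast h
      have hs0 : 0 < Real.sqrt (a^2 + P^2) := Real.sqrt_pos.mpr (by positivity)
      have keyre' : (A*A - B*B) * (a*a) = B*B*(P*P) := by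
        rw [him] at keyre
        linear_combination keyre
      have hq : 0 < B*B*(P*P) := mul_pos (mul_self_pos.mpr hB) (mul_pos hP hP)
      have hAgtB : B^2 < A^2 := by
        rcases lt_or_gt_of_ne hAB2 with h' | h'
        · exfalso
          have hneg : (A*A - B*B) * (a*a) < 0 :=
            mul_neg_of_neg_of_pos (by nlinarith) (mul_pos hre hre)
          linarith
        · linarith
      have hABsign : 0 < A * B := by
        have heq : A * a = B * Real.sqrt (a^2 + P^2) := by linarith
        have key2 : A*B*(a*Real.sqrt (a^2 + P^2)) = (B*Real.sqrt (a^2 + P^2))^2 := by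
          linear_combination (B * Real.sqrt (a^2 + P^2)) * heq
        nlinarith [key2, mul_self_pos.mpr (mul_ne_zero hB hs0.ne'), mul_pos hre hs0]
      rcases lt_trichotomy B 0 with hb | hb | hb
      · right
        constructor
        · nlinarith
        · exact hb
      · exact absurd hb hB
      · left
        constructor
        · nlinarith
        · exact hb
  · rintro (⟨h1, h2⟩ | ⟨h1, h2⟩)
    · exact aux_exists P A B hP h2.ne' (by nlinarith) (by rw [abs_of_pos h2, abs_of_pos (lt_trans h2 h1)]; ring)
    · exact aux_exists P A B hP h2.ne (by nlinarith) (by rw [abs_of_neg h2, abs_of_neg (lt_trans h1 h2)]; ring)
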